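/- Entropy rate formula for trees: The entropy of the leaf distribution normalized by the expected leaf depth equals the P_B-average of the branching entropies: H(P_L)/E[w(L)] = Σ_{j∈B} P_B(j) · H(P_{S_j}). -/

import Mathlib

/-- A finite rooted tree with data of type `α` at the leaves. -/
inductive PTree (α : Type) : Type where
  | leaf (a : α) : PTree α
  | node (n : ℕ) (children : Fin n → PTree α) : PTree α

namespace PTree

/-- Node probability `Q_j`: sum of the probabilities of the leaves below the node. -/
def Q {α : Type} (pr : α → ℝ) : PTree α → ℝ
  | .leaf a => pr a
  | .node n c => ∑ k : Fin n, Q pr (c k)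

/-- All leaf probabilities are positive and every branching node has at least one
successor (so all node probabilities `Q_j` are positive). -/
def pos {α : Type} (pr : α → ℝ) : PTree α → Prop
  | .leaf a => 0 < pr a
  | .node n c => 0 < n ∧ ∀ k : Fin n, pos pr (c k)

/-- Expected value `E[f(L)]` over the leaves; nodes are identified by their
address (list of child indices from the root). -/
def leafExp {α : Type} (pr : α → ℝ) (f : List ℕ → ℝ) : PTree α → List ℕ → ℝ
  | .leaf a, addr => pr a * f addr
  | .node n c, addr => ∑ k : Fin n, leafExp pr f (c k) (addr ++ [k.val])

/-- Entropy of the leaf distribution. -/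
noncomputable def leafEntropy {α : Type} (pr : α → ℝ) : PTree α → ℝ
  | .leaf a => -(pr a * Real.logb 2 (pr a))
  | .node n c => ∑ k : Fin n, leafEntropy pr (c k)

/-- `Σ_{j∈B} P_B(j) · H(P_{S_j})` with `P_B(j) = Q_j / W`. -/
noncomputable def branchEntropyNorm {α : Type} (pr : α → ℝ) (W : ℝ) : PTree α → ℝ
  | .leaf _ => 0
  | .node n c =>
      (Q pr (.node n c) / W) *
        (-(∑ k : Fin n, (Q pr (c k) / Q pr (.node n c)) *
            Real.logb 2 (Q pr (c k) / Q pr (.node n c))))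
      + ∑ k : Fin n, branchEntropyNorm pr W (c k)


lemma Q_pos {α : Type} (pr : α → ℝ) (t : PTree α) (h : pos pr t) : 0 < Q pr t := by
  induction t with
  | leaf a => exact h
  | node n c ih =>
      obtain ⟨hn, hc⟩ := h
      have : (0:ℝ) < ∑ k : Fin n, Q pr (c k) := by
        apply Finset.sum_pos (fun k _ => ih k (hc k))
        exact ⟨⟨0, hn⟩, Finset.mem_univ _⟩
      simpa [Q] using this

lemma branchEntropyNorm_scale {α : Type} (pr : α → ℝ) (W : ℝ) (t : PTree α) :
    branchEntropyNorm pr W t = branchEntropyNorm pr 1 t / W := by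
  induction t with
  | leaf a => simp [branchEntropyNorm]
  | node n c ih =>
      simp only [branchEntropyNorm, ih]
      rw [← Finset.sum_div, add_div]
      congr 1
      ring

lemma leafEntropy_eq {α : Type} (pr : α → ℝ) (t : PTree α) (h : pos pr t) :
    leafEntropy pr t = branchEntropyNorm pr 1 t - Q pr t * Real.logb 2 (Q pr t) := by
  induction t with
  | leaf a => simp [leafEntropy, branchEntropyNorm, Q]
  | node n c ih =>
      obtain ⟨hn, hc⟩ := h
      have hQpos : 0 < Q pr (.node n c) := Q_pos pr _ ⟨hn, hc⟩
      have hQk : ∀ k : Fin n, 0 < Q pr (c k) := fun k => Q_pos pr _ (hc k)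
      have key : Q pr (.node n c) *
          (-(∑ k : Fin n, (Q pr (c k) / Q pr (.node n c)) *
              Real.logb 2 (Q pr (c k) / Q pr (.node n c))))
          = -(∑ k : Fin n, Q pr (c k) * Real.logb 2 (Q pr (c k)))
            + Q pr (.node n c) * Real.logb 2 (Q pr (.node n c)) := by
        rw [mul_neg, Finset.mul_sum]
        have : ∀ k : Fin n,
            Q pr (.node n c) * ((Q pr (c k) / Q pr (.node n c)) *
              Real.logb 2 (Q pr (c k) / Q pr (.node n c)))
            = Q pr (c k) * Real.logb 2 (Q pr (c k))
              - Q pr (c k) * Real.logb 2 (Q pr (.node n c)) := by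
          intro k
          rw [Real.logb_div (ne_of_gt (hQk k)) (ne_of_gt hQpos)]
          field_simp
        rw [Finset.sum_congr rfl (fun k _ => this k), Finset.sum_sub_distrib,
          ← Finset.sum_mul]
        have hsum : ∑ k : Fin n, Q pr (c k) = Q pr (.node n c) := rfl
        rw [hsum]
        ring
      calc leafEntropy pr (.node n c)
          = ∑ k : Fin n, leafEntropy pr (c k) := rfl
        _ = ∑ k : Fin n, (branchEntropyNorm pr 1 (c k)
              - Q pr (c k) * Real.logb 2 (Q pr (c k))) :=
            Finset.sum_congr rfl (fun k _ => ih k (hc k))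
        _ = ∑ k : Fin n, branchEntropyNorm pr 1 (c k)
            - ∑ k : Fin n, Q pr (c k) * Real.logb 2 (Q pr (c k)) :=
            Finset.sum_sub_distrib _ _
        _ = _ := by
            simp only [branchEntropyNorm, div_one]
            rw [key]; ring

/-- Entropy rate formula: `H(P_L)/E[w(L)] = Σ_{j∈B} P_B(j) · H(P_{S_j})`. -/
theorem entropy_rate_lemma {α : Type} (pr : α → ℝ) (t : PTree α)
    (hpos : pos pr t) (hQ : Q pr t = 1)
    (hW : 0 < leafExp pr (fun addr => (addr.length : ℝ)) t []) :
    leafEntropy pr t / leafExp pr (fun addr => (addr.length : ℝ)) t []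
      = branchEntropyNorm pr (leafExp pr (fun addr => (addr.length : ℝ)) t []) t := by
  have h1 := leafEntropy_eq pr t hpos
  rw [hQ] at h1
  simp at h1
  rw [h1, branchEntropyNorm_scale pr (leafExp pr (fun addr => (addr.length : ℝ)) t []) t]

end PTree
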